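/- For the ODE ẋ = −4x − 2y + x² − (2/3)y², ẏ = 3x + y + 2xy + (5/3)y², the function φ₂(x,y) = (−6 + 3x + 2y)/(3x + 2y) satisfies the eigenfunction equation ∇φ₂ · F = 2φ₂ for all (x,y) with 3x + 2y ≠ 0. -/
import Mathlib


/-- φ₂(x,y) = (−6+3x+2y)/(3x+2y) is a Koopman eigenfunction with eigenvalue 2 for
ẋ = −4x − 2y + x² − (2/3)y², ẏ = 3x + y + 2xy + (5/3)y², wherever 3x + 2y ≠ 0. -/
theorem stmt_11 :
    ∀ x y : ℝ, 3 * x + 2 * y ≠ 0 →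
      deriv (fun s : ℝ => (-6 + 3 * s + 2 * y) / (3 * s + 2 * y)) x *
        (-4 * x - 2 * y + x ^ 2 - (2 / 3) * y ^ 2) +
      deriv (fun s : ℝ => (-6 + 3 * x + 2 * s) / (3 * x + 2 * s)) y *
        (3 * x + y + 2 * x * y + (5 / 3) * y ^ 2) =
      2 * ((-6 + 3 * x + 2 * y) / (3 * x + 2 * y)) := by
  intro x y h
  have h1 : deriv (fun s : ℝ => (-6 + 3 * s + 2 * y) / (3 * s + 2 * y)) x
      = 18 / (3 * x + 2 * y) ^ 2 := by
    have hd : HasDerivAt (fun s : ℝ => (-6 + 3 * s + 2 * y) / (3 * s + 2 * y))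
        ((3 * (3 * x + 2 * y) - (-6 + 3 * x + 2 * y) * 3) / (3 * x + 2 * y) ^ 2) x := by
      have hn : HasDerivAt (fun s : ℝ => -6 + 3 * s + 2 * y) 3 x := by
        simpa using (((hasDerivAt_id x).const_mul 3).const_add (-6)).add_const (2 * y)
      have hm : HasDerivAt (fun s : ℝ => 3 * s + 2 * y) 3 x := by
        simpa using ((hasDerivAt_id x).const_mul 3).add_const (2 * y)
      exact hn.div hm h
    rw [hd.deriv]; ring
  have h2 : deriv (fun s : ℝ => (-6 + 3 * x + 2 * s) / (3 * x + 2 * s)) y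
      = 12 / (3 * x + 2 * y) ^ 2 := by
    have hd : HasDerivAt (fun s : ℝ => (-6 + 3 * x + 2 * s) / (3 * x + 2 * s))
        ((2 * (3 * x + 2 * y) - (-6 + 3 * x + 2 * y) * 2) / (3 * x + 2 * y) ^ 2) y := by
      have hn : HasDerivAt (fun s : ℝ => -6 + 3 * x + 2 * s) 2 y := by
        simpa using ((hasDerivAt_id y).const_mul 2).const_add (-6 + 3 * x)
      have hm : HasDerivAt (fun s : ℝ => 3 * x + 2 * s) 2 y := by
        simpa using ((hasDerivAt_id y).const_mul 2).const_add (3 * x)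
      exact hn.div hm h
    rw [hd.deriv]; ring
  rw [h1, h2]
  field_simp
  ring
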